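/- Let 0 < d < 1, let A be the 2×2 matrix with (1,2)-entry 1 and all other entries 0, and let D = diag(d, 1). Then w(A) = 1/2, w(AD⁻¹) = 1/2, and w(DA) = d/2, so w(A)² > w(DA)·w(AD⁻¹). Hence the mixed inequality w(A)² ≤ w(DA)·w(AD⁻¹) fails even for entrywise nonnegative A and positive diagonal D. -/

import Mathlib

open scoped Matrix

/-- The numerical radius of an `n × n` complex matrix, viewed as an operator on `ℂⁿ`
with the Euclidean norm. -/
noncomputable def matNumRad {n : ℕ} (M : Matrix (Fin n) (Fin n) ℂ) : ℝ :=
  sSup {r : ℝ | ∃ x : EuclideanSpace ℂ (Fin n), ‖x‖ = 1 ∧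
    r = ‖(inner ℂ (Matrix.toEuclideanCLM (𝕜 := ℂ) M x) x : ℂ)‖}

lemma inner_nilp (c : ℂ) (x : EuclideanSpace ℂ (Fin 2)) :
    (inner ℂ (Matrix.toEuclideanCLM (𝕜 := ℂ) !![0, c; 0, 0] x) x : ℂ)
      = starRingEnd ℂ (c * x 1) * x 0 := by
  have h := Matrix.ofLp_toEuclideanCLM (!![0, c; 0, 0]) x
  have h2 : ∀ i, Matrix.toEuclideanCLM (𝕜 := ℂ) !![0, c; 0, 0] x i
      = (!![0, c; 0, 0] *ᵥ (x : Fin 2 → ℂ)) i := fun i => congrFun h i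
  simp [PiLp.inner_apply, Fin.sum_univ_two, h2, Matrix.mulVec, dotProduct, mul_comm]

lemma nilp_rad (c : ℂ) : matNumRad !![0, c; 0, 0] = ‖c‖ / 2 := by
  have hs2 : (0:ℝ) < Real.sqrt 2 := Real.sqrt_pos.mpr (by norm_num)
  apply IsGreatest.csSup_eq
  constructor
  · refine ⟨(WithLp.equiv 2 _).symm ![((Real.sqrt 2)⁻¹ : ℂ), ((Real.sqrt 2)⁻¹ : ℂ)], ?_, ?_⟩
    · rw [EuclideanSpace.norm_eq]
      have hn : ‖((Real.sqrt 2)⁻¹ : ℂ)‖ = (Real.sqrt 2)⁻¹ := by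
        rw [show ((Real.sqrt 2)⁻¹ : ℂ) = (((Real.sqrt 2)⁻¹ : ℝ) : ℂ) by push_cast; ring]
        rw [Complex.norm_real, Real.norm_eq_abs, abs_of_nonneg (by positivity)]
      simp only [WithLp.equiv_symm_apply, WithLp.ofLp_toLp, Fin.sum_univ_two]
      rw [show (![((Real.sqrt 2)⁻¹ : ℂ), ((Real.sqrt 2)⁻¹ : ℂ)] 0) = ((Real.sqrt 2)⁻¹ : ℂ) from rfl,
          show (![((Real.sqrt 2)⁻¹ : ℂ), ((Real.sqrt 2)⁻¹ : ℂ)] 1) = ((Real.sqrt 2)⁻¹ : ℂ) from rfl,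
          hn]
      rw [Real.sqrt_eq_one, inv_pow, Real.sq_sqrt (by norm_num : (0:ℝ) ≤ 2)]
      norm_num
    · rw [inner_nilp]
      simp only [WithLp.equiv_symm_apply, WithLp.ofLp_toLp]
      rw [show (![((Real.sqrt 2)⁻¹ : ℂ), ((Real.sqrt 2)⁻¹ : ℂ)] 0) = ((Real.sqrt 2)⁻¹ : ℂ) from rfl,
          show (![((Real.sqrt 2)⁻¹ : ℂ), ((Real.sqrt 2)⁻¹ : ℂ)] 1) = ((Real.sqrt 2)⁻¹ : ℂ) from rfl]
      have hn : ‖((Real.sqrt 2)⁻¹ : ℂ)‖ = (Real.sqrt 2)⁻¹ := by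
        rw [show ((Real.sqrt 2)⁻¹ : ℂ) = (((Real.sqrt 2)⁻¹ : ℝ) : ℂ) by push_cast; ring]
        rw [Complex.norm_real, Real.norm_eq_abs, abs_of_nonneg (by positivity)]
      rw [norm_mul, RCLike.norm_conj, norm_mul, hn]
      rw [← Real.sqrt_mul_self (le_of_lt hs2)] 
      field_simp
      rw [Real.sq_sqrt (by positivity), Real.sq_sqrt (by norm_num)]
  · rintro r ⟨x, hx, rfl⟩
    rw [inner_nilp]
    have hn : ‖x 0‖ ^ 2 + ‖x 1‖ ^ 2 = 1 := by
      have h1 := EuclideanSpace.norm_eq x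
      rw [hx] at h1
      have h2 : Real.sqrt (∑ i, ‖x i‖ ^ 2) = 1 := h1.symm
      have := Real.sqrt_eq_one.mp h2
      simpa [Fin.sum_univ_two] using this
    have h0 : (0:ℝ) ≤ ‖c‖ := norm_nonneg c
    have h1 := norm_nonneg (x 0); have h2 := norm_nonneg (x 1)
    rw [norm_mul, RCLike.norm_conj, norm_mul]
    nlinarith [sq_nonneg (‖x 0‖ - ‖x 1‖)]

/-- For `0 < d < 1`, `A = !![0,1;0,0]` and `D = diag(d,1)` one has `w(A) = 1/2`,
`w(AD⁻¹) = 1/2` and `w(DA) = d/2`, so the mixed inequality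
`w(A)² ≤ w(DA)·w(AD⁻¹)` fails. -/
theorem numRad_mixed_counterexample (d : ℝ) (hd0 : 0 < d) (hd1 : d < 1) :
    matNumRad (!![0, 1; 0, 0] : Matrix (Fin 2) (Fin 2) ℂ) = 1 / 2 ∧
    matNumRad ((!![0, 1; 0, 0] : Matrix (Fin 2) (Fin 2) ℂ) *
        (!![(d : ℂ), 0; 0, 1])⁻¹) = 1 / 2 ∧
    matNumRad ((!![(d : ℂ), 0; 0, 1]) * !![0, 1; 0, 0]) = d / 2 ∧
    matNumRad ((!![(d : ℂ), 0; 0, 1]) * !![0, 1; 0, 0]) *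
        matNumRad ((!![0, 1; 0, 0] : Matrix (Fin 2) (Fin 2) ℂ) * (!![(d : ℂ), 0; 0, 1])⁻¹)
      < matNumRad (!![0, 1; 0, 0] : Matrix (Fin 2) (Fin 2) ℂ) ^ 2 := by
  have hdne : (d : ℂ) ≠ 0 := by exact_mod_cast hd0.ne'
  have hinv : (!![(d : ℂ), 0; 0, 1])⁻¹ = !![(d : ℂ)⁻¹, 0; 0, 1] := by
    apply Matrix.inv_eq_right_inv
    ext i j
    fin_cases i <;> fin_cases j <;>
      simp [Matrix.mul_apply, Fin.sum_univ_two, mul_inv_cancel₀ hdne]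
  have hAD : (!![0, 1; 0, 0] : Matrix (Fin 2) (Fin 2) ℂ) * (!![(d : ℂ), 0; 0, 1])⁻¹
      = !![0, 1; 0, 0] := by
    rw [hinv]; ext i j
    fin_cases i <;> fin_cases j <;> simp [Matrix.mul_apply, Fin.sum_univ_two]
  have hDA : (!![(d : ℂ), 0; 0, 1]) * (!![0, 1; 0, 0] : Matrix (Fin 2) (Fin 2) ℂ)
      = !![0, (d : ℂ); 0, 0] := by
    ext i j
    fin_cases i <;> fin_cases j <;> simp [Matrix.mul_apply, Fin.sum_univ_two]
  have hA : matNumRad (!![0, 1; 0, 0] : Matrix (Fin 2) (Fin 2) ℂ) = 1 / 2 := by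
    rw [nilp_rad]; norm_num
  have hADw : matNumRad ((!![0, 1; 0, 0] : Matrix (Fin 2) (Fin 2) ℂ) *
      (!![(d : ℂ), 0; 0, 1])⁻¹) = 1 / 2 := by rw [hAD, nilp_rad]; norm_num
  have hDAw : matNumRad ((!![(d : ℂ), 0; 0, 1]) * !![0, 1; 0, 0]) = d / 2 := by
    rw [hDA, nilp_rad, Complex.norm_real, Real.norm_eq_abs, abs_of_pos hd0]
  refine ⟨hA, hADw, hDAw, ?_⟩
  rw [hA, hADw, hDAw]
  nlinarith
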